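/- If u, v are coprime integers and u^4 + 2u^3 v + 2u v^3 + v^4 = ±3^k for some integer k ≥ 2, then a contradiction arises; hence k ≤ 1. (Proof idea: modulo 3 the left side is (v-u)^4, forcing u ≡ v mod 3, then u^3 ≡ v^3 mod 9 gives 3u^3(u+v) ≡ 0 mod 9, forcing 3 | u and 3 | v, contradicting coprimality.) -/
import Mathlib

lemma zmod9_key : ∀ a b : ZMod 9, a ^ 4 + 2 * a ^ 3 * b + 2 * a * b ^ 3 + b ^ 4 = 0 →
    (ZMod.castHom (show (3:ℕ) ∣ 9 by norm_num) (ZMod 3) a = 0 ∧ ZMod.castHom (show (3:ℕ) ∣ 9 by norm_num) (ZMod 3) b = 0) := by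
  decide

/-- If `u, v` are coprime integers and `u^4 + 2u^3 v + 2u v^3 + v^4 = ±3^k`,
then `k ≤ 1`. -/
theorem quartic_three_power_bound (u v : ℤ) (h : IsCoprime u v) (k : ℕ)
    (hk : u ^ 4 + 2 * u ^ 3 * v + 2 * u * v ^ 3 + v ^ 4 = 3 ^ k ∨
          u ^ 4 + 2 * u ^ 3 * v + 2 * u * v ^ 3 + v ^ 4 = -(3 ^ k)) : k ≤ 1 := by
  by_contra hle
  push_neg at hle
  have h9 : (9 : ℤ) ∣ u ^ 4 + 2 * u ^ 3 * v + 2 * u * v ^ 3 + v ^ 4 := by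
    have h9pow : (9 : ℤ) ∣ 3 ^ k := by
      have : (3 : ℤ) ^ 2 ∣ 3 ^ k := pow_dvd_pow 3 hle
      norm_num at this ⊢; exact this
    rcases hk with hk | hk <;> rw [hk]
    · exact h9pow
    · exact h9pow.neg_right
  have h0 : ((u : ZMod 9)) ^ 4 + 2 * (u : ZMod 9) ^ 3 * v + 2 * (u : ZMod 9) * (v : ZMod 9) ^ 3
      + (v : ZMod 9) ^ 4 = 0 := by
    have := (ZMod.intCast_zmod_eq_zero_iff_dvd _ 9).mpr h9
    push_cast at this
    linear_combination this
  obtain ⟨hu, hv⟩ := zmod9_key _ _ h0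
  have hu3 : (3 : ℤ) ∣ u := by
    have : (u : ZMod 3) = 0 := by simpa using hu
    exact_mod_cast (ZMod.intCast_zmod_eq_zero_iff_dvd u 3).mp this
  have hv3 : (3 : ℤ) ∣ v := by
    have : (v : ZMod 3) = 0 := by simpa using hv
    exact_mod_cast (ZMod.intCast_zmod_eq_zero_iff_dvd v 3).mp this
  obtain ⟨x, y, hxy⟩ := h
  have : (3 : ℤ) ∣ 1 := hxy ▸ dvd_add (hu3.mul_left x) (hv3.mul_left y)
  norm_num at this
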